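/- Let (X, c) and (Y, d) be quantum Markov chains on ℂ^d. If states x : X and y : Y are AM-bisimilar, then they are kernel bisimilar. -/
import Mathlib


open Matrix ComplexOrder

/-- An effect on ℂ^d: a positive semidefinite matrix below the identity. -/
def IsEffect {d : ℕ} (L : Matrix (Fin d) (Fin d) ℂ) : Prop :=
  L.PosSemidef ∧ (1 - L).PosSemidef

/-- A density operator on ℂ^d: a positive semidefinite matrix of trace one. -/
def IsDensity {d : ℕ} (ρ : Matrix (Fin d) (Fin d) ℂ) : Prop :=
  ρ.PosSemidef ∧ ρ.trace = 1

/-- Pushforward of a (finitely supported) weight function along `f`. -/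
noncomputable def push {M : Type*} [AddCommMonoid M] {X Z : Type} (f : X → Z)
    (Δ : X → M) : Z → M :=
  fun z => ∑ᶠ (x : X) (_ : f x = z), Δ x

section pushLemmas
variable {M : Type*} [AddCommMonoid M] {X Z W : Type}

open Classical in
lemma push_apply (f : X → Z) (Δ : X → M) (hΔ : (Function.support Δ).Finite) (z : Z) :
    push f Δ z = ∑ x ∈ hΔ.toFinset.filter (fun x => f x = z), Δ x := by
  show ∑ᶠ x ∈ {x | f x = z}, Δ x = _
  apply finsum_mem_eq_sum_of_inter_support_eq
  ext a
  simp [Set.mem_inter_iff, and_comm]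

lemma push_support (f : X → Z) (Δ : X → M) (hΔ : (Function.support Δ).Finite) :
    (Function.support (push f Δ)).Finite := by
  classical
  apply Set.Finite.subset (hΔ.image f)
  intro z hz
  by_contra hzc
  apply hz
  rw [push_apply f Δ hΔ]
  apply Finset.sum_eq_zero
  intro a ha
  simp only [Finset.mem_filter, Set.Finite.mem_toFinset, Function.mem_support] at ha
  exact absurd ⟨a, ha.1, ha.2⟩ hzc

open Classical in
lemma push_total (f : X → Z) (Δ : X → M) (hΔ : (Function.support Δ).Finite) :
    ∑ᶠ z, push f Δ z = ∑ᶠ x, Δ x := by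
  have hsub : Function.support (push f Δ) ⊆ ((hΔ.image f).toFinset : Set Z) := fun z hz => by
    simp only [Finset.coe_sort_coe, Set.Finite.coe_toFinset]
    by_contra hzc
    apply hz
    rw [push_apply f Δ hΔ]
    apply Finset.sum_eq_zero
    intro a ha
    simp only [Finset.mem_filter, Set.Finite.mem_toFinset, Function.mem_support] at ha
    exact absurd ⟨a, ha.1, ha.2⟩ hzc
  rw [finsum_eq_sum_of_support_subset (push f Δ) hsub,
    finsum_eq_sum_of_support_subset Δ (s := hΔ.toFinset) (by simp)]
  simp_rw [push_apply f Δ hΔ]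
  exact Finset.sum_fiberwise_of_maps_to (fun a ha => by
    simp only [Set.Finite.mem_toFinset, Set.mem_image] at ha ⊢
    exact ⟨a, ha, rfl⟩) Δ

open Classical in
lemma push_comp (f : Z → W) (g : X → Z) (Δ : X → M) (hΔ : (Function.support Δ).Finite) :
    push f (push g Δ) = push (f ∘ g) Δ := by
  funext w
  rw [push_apply (f ∘ g) Δ hΔ w, push_apply f (push g Δ) (push_support g Δ hΔ) w]
  simp_rw [push_apply g Δ hΔ]
  have hTsub : (push_support g Δ hΔ).toFinset ⊆ hΔ.toFinset.image g := by
    intro z hz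
    simp only [Set.Finite.mem_toFinset, Function.mem_support] at hz
    rw [push_apply g Δ hΔ] at hz
    obtain ⟨a, ha, -⟩ := Finset.exists_ne_zero_of_sum_ne_zero hz
    simp only [Finset.mem_filter] at ha
    exact Finset.mem_image.2 ⟨a, ha.1, ha.2⟩
  rw [Finset.sum_subset (Finset.filter_subset_filter _ hTsub) (fun z hz hznot => by
    simp only [Finset.mem_filter] at hz
    by_contra hne
    exact hznot (Finset.mem_filter.2 ⟨(Set.Finite.mem_toFinset _).2
      (by rw [Function.mem_support, push_apply g Δ hΔ]; exact hne), hz.2⟩))]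
  rw [← Finset.sum_fiberwise_of_maps_to (g := g)
    (t := (hΔ.toFinset.image g).filter (fun z => f z = w))
    (fun a ha => by
      simp only [Finset.mem_filter, Set.Finite.mem_toFinset, Function.comp] at ha ⊢
      exact ⟨Finset.mem_image.2 ⟨a, Set.Finite.mem_toFinset _ |>.2 ha.1, rfl⟩, ha.2⟩) Δ]
  apply Finset.sum_congr rfl
  intro z hz
  simp only [Finset.mem_filter] at hz
  apply Finset.sum_congr _ (fun _ _ => rfl)
  ext a
  simp only [Finset.mem_filter, Function.comp]
  constructor
  · rintro ⟨ha, rfl⟩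
    exact ⟨⟨ha, hz.2⟩, rfl⟩
  · rintro ⟨⟨ha, -⟩, rfl⟩
    exact ⟨ha, rfl⟩

end pushLemmas

/-- A quantum (sub)distribution on `X` with weights on ℂ^d. -/
def IsQDist {d : ℕ} {X : Type} (Δ : X → Matrix (Fin d) (Fin d) ℂ) : Prop :=
  (Function.support Δ).Finite ∧ (∀ x, (Δ x).PosSemidef) ∧ (1 - ∑ᶠ x, Δ x).PosSemidef

/-- A quantum Markov chain on ℂ^d. -/
def IsQMC {d : ℕ} {X : Type} (c : X → X → Matrix (Fin d) (Fin d) ℂ) : Prop :=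
  ∀ x, IsQDist (c x)


lemma IsQDist.push_qdist {d : ℕ} {X Z : Type} (f : X → Z)
    {Δ : X → Matrix (Fin d) (Fin d) ℂ} (hΔ : IsQDist Δ) : IsQDist (push f Δ) := by
  classical
  obtain ⟨hfin, hpsd, hone⟩ := hΔ
  refine ⟨push_support f Δ hfin, fun z => ?_, ?_⟩
  · rw [push_apply f Δ hfin]
    exact Finset.sum_induction _ _ (fun _ _ => Matrix.PosSemidef.add)
      Matrix.PosSemidef.zero (fun x _ => hpsd x)
  · rwa [push_total f Δ hfin]

/-- A homomorphism of quantum Markov chains. -/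
def IsQHom {d : ℕ} {X Z : Type} (c : X → X → Matrix (Fin d) (Fin d) ℂ)
    (e : Z → Z → Matrix (Fin d) (Fin d) ℂ) (f : X → Z) : Prop :=
  ∀ x, e (f x) = push f (c x)

/-- Kernel bisimilarity of states of two quantum Markov chains. -/
def QKernelBisim {d : ℕ} {X Y : Type} (c : X → X → Matrix (Fin d) (Fin d) ℂ)
    (dY : Y → Y → Matrix (Fin d) (Fin d) ℂ) (x : X) (y : Y) : Prop :=
  ∃ (Z : Type) (e : Z → Z → Matrix (Fin d) (Fin d) ℂ) (m₁ : X → Z) (m₂ : Y → Z),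
    IsQMC e ∧ IsQHom c e m₁ ∧ IsQHom dY e m₂ ∧ m₁ x = m₂ y

/-- `R ⊆ X × Y` is an AM-bisimulation between the quantum Markov chains
`(X, c)` and `(Y, d)` if there is a quantum Markov chain structure on `R`
making the two projections homomorphisms. -/
def IsQAMBisim {d : ℕ} {X Y : Type} (c : X → X → Matrix (Fin d) (Fin d) ℂ)
    (dY : Y → Y → Matrix (Fin d) (Fin d) ℂ) (R : Set (X × Y)) : Prop :=
  ∃ e : R → R → Matrix (Fin d) (Fin d) ℂ, IsQMC e ∧
    (∀ r : R, c r.1.1 = push (fun r' : R => r'.1.1) (e r)) ∧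
    (∀ r : R, dY r.1.2 = push (fun r' : R => r'.1.2) (e r))

/-- AM-bisimilarity of states of two quantum Markov chains. -/
def QAMBisimilar {d : ℕ} {X Y : Type} (c : X → X → Matrix (Fin d) (Fin d) ℂ)
    (dY : Y → Y → Matrix (Fin d) (Fin d) ℂ) (x : X) (y : Y) : Prop :=
  ∃ R : Set (X × Y), IsQAMBisim c dY R ∧ (x, y) ∈ R

/-- AM-bisimilar states of quantum Markov chains are kernel bisimilar. -/
theorem stmt11 (d : ℕ) {X Y : Type} (c : X → X → Matrix (Fin d) (Fin d) ℂ)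
    (dY : Y → Y → Matrix (Fin d) (Fin d) ℂ)
    (hc : IsQMC c) (hd : IsQMC dY) (x : X) (y : Y)
    (h : QAMBisimilar c dY x y) :
    QKernelBisim c dY x y := by
  obtain ⟨R, ⟨eR, heR, hp1, hp2⟩, hxy⟩ := h
  classical
  set S : (X ⊕ Y) → (X ⊕ Y) → Prop :=
    fun a b => ∃ r : R, a = Sum.inl r.1.1 ∧ b = Sum.inr r.1.2 with hS
  let Z := Quot S
  let m₁ : X → Z := fun x' => Quot.mk S (Sum.inl x')
  let m₂ : Y → Z := fun y' => Quot.mk S (Sum.inr y')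
  have hkey : ∀ r : R, m₁ r.1.1 = m₂ r.1.2 := fun r => Quot.sound ⟨r, rfl, rfl⟩
  let G : (X ⊕ Y) → Z → Matrix (Fin d) (Fin d) ℂ :=
    Sum.elim (fun x' => push m₁ (c x')) (fun y' => push m₂ (dY y'))
  have hGwd : ∀ a b, S a b → G a = G b := by
    rintro _ _ ⟨r, rfl, rfl⟩
    show push m₁ (c r.1.1) = push m₂ (dY r.1.2)
    rw [hp1 r, hp2 r, push_comp _ _ _ (heR r).1, push_comp _ _ _ (heR r).1]
    have hmm : m₁ ∘ (fun r' : R => r'.1.1) = m₂ ∘ (fun r' : R => r'.1.2) :=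
      funext fun r' => hkey r'
    rw [hmm]
  refine ⟨Z, Quot.lift G hGwd, m₁, m₂, ?_, fun x' => rfl, fun y' => rfl,
    Quot.sound ⟨⟨(x, y), hxy⟩, rfl, rfl⟩⟩
  intro z
  induction z using Quot.ind with
  | _ a =>
    cases a with
    | inl x' => exact (hc x').push_qdist m₁
    | inr y' => exact (hd y').push_qdist m₂
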